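/- Let v be a 2-sparse sequence over the alphabet [n] containing no 5-term alternating subsequence a b a b a (a ≠ b), such that every symbol appears at least twice, and such that for 1 ≤ i < j ≤ n the first occurrence of j precedes the first occurrence of i. Then in the unique decomposition v = I_1 I_2 ... I_{2n} into intervals each ending with an extremal term (a first or last occurrence of a symbol) and containing no other extremal term, every interval I_i consists of distinct terms. -/

import Mathlib

/-- Position `k` of the sequence `v` is extremal: it is the first or the last occurrence
of its symbol in `v`. -/
def IsExtremal (v : List ℕ) (k : ℕ) : Prop :=
  k < v.length ∧ ((∀ k' < k, v.getD k' 0 ≠ v.getD k 0) ∨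
    (∀ k', k < k' → k' < v.length → v.getD k' 0 ≠ v.getD k 0))

/-- If `s` is a sublist of `l.drop k'` with `k < k'` and `k < l.length`, then
`l.getD k 0 :: s` is a sublist of `l.drop k`. -/
lemma cons_sublist_drop (l : List ℕ) {k k' : ℕ} (hkk : k < k') (hk : k < l.length)
    {s : List ℕ} (hs : List.Sublist s (l.drop k')) :
    List.Sublist (l.getD k 0 :: s) (l.drop k) := by
  rw [List.drop_eq_getElem_cons hk, List.getD_eq_getElem l 0 hk]
  refine List.Sublist.cons₂ _ (hs.trans ?_)
  have h : l.drop k' = (l.drop (k+1)).drop (k' - (k+1)) := by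
    rw [List.drop_drop]; congr 1; omega
  rw [h]; exact List.drop_sublist _ _

theorem stmt4 (n : ℕ) (v : List ℕ)
    (hmem : ∀ x ∈ v, x ∈ Finset.Icc 1 n)
    (hsparse : v.Chain' (· ≠ ·))
    (hnoalt : ¬ ∃ a b : ℕ, a ≠ b ∧ [a, b, a, b, a].Sublist v)
    (htwice : ∀ i ∈ Finset.Icc 1 n, 2 ≤ v.count i)
    (hfirst : ∀ i j : ℕ, 1 ≤ i → i < j → j ≤ n → v.idxOf j < v.idxOf i)
    (Is : List (List ℕ))
    (hjoin : Is.flatten = v) (hlen : Is.length = 2 * n)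
    (hend : ∀ j : Fin Is.length, (Is.get j) ≠ [] ∧
      IsExtremal v (((Is.take j).flatten).length + (Is.get j).length - 1) ∧
      ∀ t, t + 1 < (Is.get j).length → ¬ IsExtremal v (((Is.take j).flatten).length + t)) :
    ∀ I ∈ Is, I.Nodup := by
  intro I hI
  by_contra hnd
  obtain ⟨j, hj⟩ := List.mem_iff_get.mp hI
  -- duplicate indices i1 < i2 in I
  rw [List.nodup_iff_injective_get, Function.not_injective_iff] at hnd
  obtain ⟨x, y, hxy, hne⟩ := hnd
  obtain ⟨i1, i2, h12, heq⟩ : ∃ i1 i2 : ℕ, i1 < i2 ∧ i2 < I.length ∧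
      I.getD i1 0 = I.getD i2 0 := by
    have hxyD : I.getD (x:ℕ) 0 = I.getD (y:ℕ) 0 := by
      rw [List.getD_eq_getElem I 0 x.isLt, List.getD_eq_getElem I 0 y.isLt]
      simpa [List.get_eq_getElem] using hxy
    rcases lt_or_gt_of_ne (fun h => hne (Fin.ext h) : (x:ℕ) ≠ y) with h | h
    · exact ⟨x, y, h, y.isLt, hxyD⟩
    · exact ⟨y, x, h, x.isLt, hxyD.symm⟩
  obtain ⟨hi2, heq⟩ := heq
  set s := ((Is.take (j:ℕ)).flatten).length with hsdef
  set B := (Is.drop ((j:ℕ)+1)).flatten with hBdef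
  -- decomposition of v
  have hIs : Is = Is.take (j:ℕ) ++ (I :: Is.drop ((j:ℕ)+1)) := by
    conv_lhs => rw [← List.take_append_drop (j:ℕ) Is]
    congr 1
    rw [List.drop_eq_getElem_cons j.isLt, ← List.get_eq_getElem, hj]
  have hdecomp : v = (Is.take (j:ℕ)).flatten ++ (I ++ B) := by
    rw [← hjoin]
    conv_lhs => rw [hIs]
    rw [List.flatten_append, List.flatten_cons]
  have hvlen : v.length = s + (I.length + B.length) := by
    conv_lhs => rw [hdecomp]
    simp only [List.length_append, hsdef]
  -- values of v inside the interval
  have hv : ∀ t, t < I.length → v.getD (s + t) 0 = I.getD t 0 := by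
    intro t ht
    have h1 : v[s+t]? = I[t]? := by
      rw [hdecomp, List.getElem?_append_right (by omega), Nat.add_sub_cancel_left,
        List.getElem?_append, if_pos ht]
    rw [List.getD_eq_getElem?_getD, List.getD_eq_getElem?_getD, h1]
  -- chain' as getD
  have hchain : ∀ k, k + 1 < v.length → v.getD k 0 ≠ v.getD (k+1) 0 := by
    intro k hk
    rw [List.getD_eq_getElem v 0 (by omega), List.getD_eq_getElem v 0 hk]
    exact List.isChain_iff_getElem.mp hsparse k (by omega)
  set a := I.getD i1 0 with hadef
  set p := s + i1 with hpdef
  set q := s + i2 with hqdef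
  have hvp : v.getD p 0 = a := hv i1 (by omega)
  have hvq : v.getD q 0 = a := by rw [hv i2 hi2, ← heq]
  have hqlen : q < v.length := by omega
  -- p + 2 ≤ q
  have hp2 : p + 2 ≤ q := by
    rcases Nat.lt_or_ge (p+1) q with h | h
    · omega
    · have hq1 : q = p + 1 := by omega
      exact absurd (by rw [hvp, ← hq1, hvq]) (hchain p (by omega))
  set b := v.getD (q-1) 0 with hbdef
  have hba : b ≠ a := by
    have h := hchain (q-1) (by omega)
    rwa [show q - 1 + 1 = q by omega, hvq] at h
  -- interior points of the interval are not extremal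
  have hint : ∀ t, t + 1 < I.length → ¬ IsExtremal v (s + t) := by
    have h := (hend j).2.2
    rwa [hj] at h
  -- q - 1 is interior, hence not extremal
  have hnr : ¬ IsExtremal v (q - 1) := by
    have h := hint (i2 - 1) (by omega)
    rwa [show s + (i2 - 1) = q - 1 by omega] at h
  rw [IsExtremal, not_and_or] at hnr
  rcases hnr with h | h
  · exact h (by omega)
  push_neg at h
  obtain ⟨⟨k', hk'lt, hk'⟩, ⟨r'', hr''gt, hr''len, hr''⟩⟩ := h
  -- the later occurrence of b is after q
  have hr''q : q < r'' := by
    rcases Nat.lt_or_ge q r'' with h | h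
    · exact h
    · exfalso
      have hq : r'' = q := by omega
      rw [hq, hvq] at hr''
      exact hba hr''.symm
  -- first occurrence of b
  have hbex : ∃ k, v.getD k 0 = b := ⟨k', hk'⟩
  set f := Nat.find hbex with hfdef
  have hf : v.getD f 0 = b := Nat.find_spec hbex
  have hfmin : ∀ k < f, v.getD k 0 ≠ b := fun k hk => Nat.find_min hbex hk
  have hfk' : f ≤ k' := Nat.find_min' hbex hk'
  have hfp : f ≠ p := by
    intro h; rw [h, hvp] at hf; exact hba hf.symm
  rcases Nat.lt_or_ge f p with hflt | hfge
  · -- babab pattern at f < p < q-1 < q < r''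
    apply hnoalt
    refine ⟨b, a, hba, ?_⟩
    have s5 : List.Sublist [v.getD r'' 0] (v.drop r'') :=
      cons_sublist_drop v (Nat.lt_succ_self r'') hr''len (List.nil_sublist _)
    have s4 := cons_sublist_drop v hr''q hqlen s5
    have s3 := cons_sublist_drop v (by omega : q - 1 < q) (by omega) s4
    have s2 := cons_sublist_drop v (by omega : p < q - 1) (by omega) s3
    have s1 := cons_sublist_drop v (by omega : f < p) (by omega) s2
    have hsub := s1.trans (List.drop_sublist f v)
    rwa [hf, hvp, ← hbdef, hvq, hr''] at hsub
  · -- f is interior to the interval, but f is a first occurrence: contradiction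
    have hflt : f < q - 1 := by omega
    have hfgt : p < f := lt_of_le_of_ne hfge (Ne.symm hfp)
    have hne : ¬ IsExtremal v f := by
      have h := hint (f - s) (by omega)
      rwa [show s + (f - s) = f by omega] at h
    exact hne ⟨by omega, Or.inl (fun k hk => by rw [hf]; exact hfmin k hk)⟩
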